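/- Let G₁,…,G_l with G_i ∈ ℝ^{m_i × n_i} be given matrices and λ ≥ 0. For each i, let (p_i, q_i) be an index pair maximizing |(G_i)_{pq}| over all entries of G_i, and define S_i ∈ ℝ^{m_i × n_i} by (S_i)_{p_i q_i} = −λ·sign((G_i)_{p_i q_i}) and all other entries zero. Then max_i ‖S_i‖₁ ≤ λ and for every tuple (W₁,…,W_l) with max_i ‖W_i‖₁ ≤ λ we have Σ_{i=1}^{l} ⟨G_i, S_i⟩ ≤ Σ_{i=1}^{l} ⟨G_i, W_i⟩, where ⟨A,B⟩ = Σ_{jk} A_{jk}B_{jk}; moreover Σ_i ⟨G_i, S_i⟩ = −λ·Σ_i max_{pq} |(G_i)_{pq}|. -/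
import Mathlib

lemma double_sum_single {M N : ℕ} (p : Fin M) (q : Fin N) (c : ℝ)
    (f : Fin M → Fin N → ℝ)
    (hf : ∀ a b, f a b = if a = p ∧ b = q then c else 0) :
    (∑ a, ∑ b, f a b) = c := by
  have : ∀ a, (∑ b, f a b) = if a = p then c else 0 := by
    intro a
    by_cases ha : a = p
    · subst ha
      simp [hf]
    · simp only [hf, ha, false_and, if_neg, if_false]
      simp [ha]
  simp [this]

/-- Closed form of the conditional-gradient step for the ℓ₁/ℓ∞ group-norm
ball `{(W₁,…,W_l) : max_i ‖W_i‖₁ ≤ λ}`: in each layer `i`, put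
`-λ·sign((G_i)_{p_i q_i})` at an entry `(p_i, q_i)` of maximal magnitude
and `0` elsewhere. -/
theorem cg_step_group_l1_linf_ball {l : ℕ} (m n : Fin l → ℕ)
    (lam : ℝ) (hlam : 0 ≤ lam)
    (G : ∀ i, Matrix (Fin (m i)) (Fin (n i)) ℝ)
    (p : ∀ i, Fin (m i)) (q : ∀ i, Fin (n i))
    (hpq : ∀ i a b, |G i a b| ≤ |G i (p i) (q i)|)
    (S : ∀ i, Matrix (Fin (m i)) (Fin (n i)) ℝ)
    (hS : ∀ i, S i = fun a b =>
      if a = p i ∧ b = q i then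
        -lam * (if G i (p i) (q i) < 0 then -1 else 1)
      else 0) :
    (∀ i, (∑ a, ∑ b, |S i a b|) ≤ lam) ∧
    (∀ W : ∀ i, Matrix (Fin (m i)) (Fin (n i)) ℝ,
      (∀ i, (∑ a, ∑ b, |W i a b|) ≤ lam) →
      (∑ i, ∑ a, ∑ b, G i a b * S i a b) ≤
        ∑ i, ∑ a, ∑ b, G i a b * W i a b) ∧
    (∑ i, ∑ a, ∑ b, G i a b * S i a b) =
      -(lam * ∑ i, |G i (p i) (q i)|) := by
  -- per-layer value of the inner product with S
  have hinner : ∀ i, (∑ a, ∑ b, G i a b * S i a b) = -(lam * |G i (p i) (q i)|) := by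
    intro i
    have := double_sum_single (p i) (q i)
      (-(lam * |G i (p i) (q i)|)) (fun a b => G i a b * S i a b) ?_
    · exact this
    · intro a b
      rw [hS]
      by_cases h : a = p i ∧ b = q i
      · obtain ⟨ha, hb⟩ := h
        subst ha; subst hb
        by_cases hneg : G i (p i) (q i) < 0
        · simp only [hneg, if_true, and_self, abs_of_neg hneg]
          ring
        · simp only [hneg, if_false, and_self, if_true,
            abs_of_nonneg (not_lt.mp hneg)]
          ring
      · simp [h]
  constructor
  · intro i
    have := double_sum_single (p i) (q i)
      (lam) (fun a b => |S i a b|) ?_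
    · rw [this]
    · intro a b
      rw [hS]
      by_cases h : a = p i ∧ b = q i
      · simp only [if_pos h, abs_mul, abs_neg]
        by_cases hneg : G i (p i) (q i) < 0 <;>
          simp [hneg, abs_of_nonneg hlam]
      · simp [h]
  refine ⟨?_, ?_⟩
  · intro W hW
    apply Finset.sum_le_sum
    intro i _
    rw [hinner i]
    have h1 : -(∑ a, ∑ b, |G i a b * W i a b|) ≤ ∑ a, ∑ b, G i a b * W i a b := by
      rw [← Finset.sum_neg_distrib]
      apply Finset.sum_le_sum; intro a _
      rw [← Finset.sum_neg_distrib]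
      apply Finset.sum_le_sum; intro b _
      exact neg_abs_le _ |>.trans_eq rfl |>.trans (le_refl _) |>.trans (le_of_eq rfl)
    have h2 : (∑ a, ∑ b, |G i a b * W i a b|) ≤ lam * |G i (p i) (q i)| := by
      calc (∑ a, ∑ b, |G i a b * W i a b|)
          ≤ ∑ a, ∑ b, |G i (p i) (q i)| * |W i a b| := by
            apply Finset.sum_le_sum; intro a _
            apply Finset.sum_le_sum; intro b _
            rw [abs_mul]
            exact mul_le_mul_of_nonneg_right (hpq i a b) (abs_nonneg _)
        _ = |G i (p i) (q i)| * ∑ a, ∑ b, |W i a b| := by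
            rw [Finset.mul_sum]; congr 1; ext a; rw [Finset.mul_sum]
        _ ≤ |G i (p i) (q i)| * lam :=
            mul_le_mul_of_nonneg_left (hW i) (abs_nonneg _)
        _ = lam * |G i (p i) (q i)| := mul_comm _ _
    linarith
  · rw [Finset.mul_sum, ← Finset.sum_neg_distrib]
    exact Finset.sum_congr rfl fun i _ => hinner i
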